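/- Let N be a positive integer, let ψ be a unit vector in a complex inner product space E, let (φ_x)_{x ∈ Fin N} be unit vectors in E, and let (C_x)_{x ∈ Fin N} be an orthonormal family in E. Define p = N^{−1} ∑_x |⟨φ_x, C_x⟩|² and F = ∑_x (1 − |⟨ψ, φ_x⟩|²). Then √(N·F) + N·√(1 − p) ≥ N − 1. -/

import Mathlib

open scoped InnerProductSpace ComplexConjugate

lemma grover_aux_norm {E : Type*} [NormedAddCommGroup E] [InnerProductSpace ℂ E]
    (u v : E) (hu : ‖u‖ = 1) (hv : ‖v‖ = 1) :
    ‖u - (inner ℂ v u : ℂ) • v‖ ^ 2 = 1 - ‖(inner ℂ v u : ℂ)‖ ^ 2 := by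
  have h := @norm_sub_sq ℂ E _ _ _ u ((inner ℂ v u : ℂ) • v)
  rw [inner_smul_right, mul_comm, ← inner_conj_symm u v, Complex.mul_conj'] at h
  rw [h, norm_smul, hu, hv]
  simp [← Complex.ofReal_pow]
  ring

lemma grover_real_step (a b c sa sb : ℝ) (ha0 : 0 ≤ a) (ha1 : a ≤ 1)
    (hb0 : 0 ≤ b) (hb1 : b ≤ 1) (hc0 : 0 ≤ c)
    (hsa0 : 0 ≤ sa) (hsb0 : 0 ≤ sb)
    (hsa2 : sa ^ 2 = 1 - a ^ 2) (hsb2 : sb ^ 2 = 1 - b ^ 2)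
    (key : a * b - sa * sb ≤ c) : 1 - c ^ 2 ≤ (sa + sb) ^ 2 := by
  rcases le_or_gt (a * b) (sa * sb) with hab | hab
  · nlinarith [sq_nonneg (a - b), sq_nonneg c, mul_nonneg ha0 hb0]
  · have h5 : 0 ≤ a * b - sa * sb := by linarith
    have h6 : (a * b - sa * sb) ^ 2 ≤ c ^ 2 := by nlinarith
    have e1 : (sa * b + a * sb) ^ 2 = 1 - (a * b - sa * sb) ^ 2 := by
      linear_combination hsa2 + hsb2 + (sb ^ 2 - 1 + b ^ 2) * hsa2
    have e2 : (sa * b + a * sb) ^ 2 ≤ (sa + sb) ^ 2 := by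
      have hab1 : a * b ≤ 1 := by nlinarith
      nlinarith [mul_nonneg (mul_nonneg hsa0 hsb0) (by linarith : (0:ℝ) ≤ 1 - a * b),
        sq_nonneg (sa * sb)]
    linarith

lemma grover_sin_triangle {E : Type*} [NormedAddCommGroup E] [InnerProductSpace ℂ E]
    (u v w : E) (hu : ‖u‖ = 1) (hv : ‖v‖ = 1) (hw : ‖w‖ = 1) :
    Real.sqrt (1 - ‖(inner ℂ u w : ℂ)‖ ^ 2) ≤
      Real.sqrt (1 - ‖(inner ℂ u v : ℂ)‖ ^ 2) + Real.sqrt (1 - ‖(inner ℂ v w : ℂ)‖ ^ 2) := by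
  set k : ℂ := inner ℂ v u with hk
  set m : ℂ := inner ℂ v w with hm
  set a : ℝ := ‖(inner ℂ u v : ℂ)‖ with ha
  set b : ℝ := ‖m‖ with hb
  set c : ℝ := ‖(inner ℂ u w : ℂ)‖ with hc
  have hka : ‖k‖ = a := by rw [ha, hk, ← norm_inner_symm]
  have hvv : (inner ℂ v v : ℂ) = 1 := by
    rw [inner_self_eq_norm_sq_to_K, hv]; norm_num
  have huv : (inner ℂ u v : ℂ) = conj k := by rw [hk, ← inner_conj_symm]
  have ha0 : 0 ≤ a := norm_nonneg _
  have hb0 : 0 ≤ b := norm_nonneg _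
  have hc0 : 0 ≤ c := norm_nonneg _
  have ha1 : a ≤ 1 := by
    simpa [ha, hu, hv] using norm_inner_le_norm (𝕜 := ℂ) u v
  have hb1 : b ≤ 1 := by
    simpa [hb, hm, hv, hw] using norm_inner_le_norm (𝕜 := ℂ) v w
  set u' : E := u - k • v with hu'
  set w' : E := w - m • v with hw'
  have h1 : (inner ℂ u' w' : ℂ) = inner ℂ u w - conj k * m := by
    simp [hu', hw', inner_sub_left, inner_sub_right, inner_smul_left, inner_smul_right,
      hvv, huv, hm, hv, mul_comm]
  have hnu : ‖u'‖ ^ 2 = 1 - a ^ 2 := by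
    rw [hu', hk, grover_aux_norm u v hu hv, ← hk, hka]
  have hnw : ‖w'‖ ^ 2 = 1 - b ^ 2 := by
    rw [hw', hm, grover_aux_norm w v hw hv, ← hm]
  set sa : ℝ := Real.sqrt (1 - a ^ 2) with hsa
  set sb : ℝ := Real.sqrt (1 - b ^ 2) with hsb
  have hsa0 : 0 ≤ sa := Real.sqrt_nonneg _
  have hsb0 : 0 ≤ sb := Real.sqrt_nonneg _
  have hsa2 : sa ^ 2 = 1 - a ^ 2 := Real.sq_sqrt (by nlinarith)
  have hsb2 : sb ^ 2 = 1 - b ^ 2 := Real.sq_sqrt (by nlinarith)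
  have hnu' : ‖u'‖ = sa := by rw [hsa, ← hnu, Real.sqrt_sq (norm_nonneg _)]
  have hnw' : ‖w'‖ = sb := by rw [hsb, ← hnw, Real.sqrt_sq (norm_nonneg _)]
  -- key inequality : a*b - sa*sb ≤ c
  have key : a * b - sa * sb ≤ c := by
    have h2 : ‖(inner ℂ u w : ℂ) - conj k * m‖ ≤ sa * sb := by
      rw [← h1, ← hnu', ← hnw']
      exact norm_inner_le_norm _ _
    have h3 : ‖conj k * m‖ - ‖(inner ℂ u w : ℂ)‖ ≤ ‖(inner ℂ u w : ℂ) - conj k * m‖ := by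
      rw [norm_sub_rev]
      exact norm_sub_norm_le _ _
    have h4 : ‖conj k * m‖ = a * b := by
      rw [norm_mul, RCLike.norm_conj, hka]
    rw [h4, ← hc] at h3
    linarith
  have hmain : 1 - c ^ 2 ≤ (sa + sb) ^ 2 :=
    grover_real_step a b c sa sb ha0 ha1 hb0 hb1 hc0 hsa0 hsb0 hsa2 hsb2 key
  calc Real.sqrt (1 - c ^ 2) ≤ Real.sqrt ((sa + sb) ^ 2) := Real.sqrt_le_sqrt hmain
    _ = sa + sb := Real.sqrt_sq (by linarith)

lemma grover_sum_sqrt_le {N : ℕ} (t : Fin N → ℝ) (ht : ∀ x, 0 ≤ t x) :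
    ∑ x : Fin N, Real.sqrt (t x) ≤ Real.sqrt ((N : ℝ) * ∑ x : Fin N, t x) := by
  have h := sq_sum_le_card_mul_sum_sq (s := Finset.univ) (f := fun x => Real.sqrt (t x))
  simp only [Real.sq_sqrt (ht _), Finset.card_univ, Fintype.card_fin] at h
  calc ∑ x : Fin N, Real.sqrt (t x)
      = Real.sqrt ((∑ x : Fin N, Real.sqrt (t x)) ^ 2) :=
        (Real.sqrt_sq (Finset.sum_nonneg fun x _ => Real.sqrt_nonneg _)).symm
    _ ≤ Real.sqrt ((N : ℝ) * ∑ x : Fin N, t x) := Real.sqrt_le_sqrt (by exact_mod_cast h)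


/-- The final step of the proof of Theorem 1: with `ψ` a unit vector, `φ x`
unit vectors, `C x` an orthonormal family, average success probability
`p = N⁻¹ ∑_x |⟨φ x, C x⟩|²` and `F = ∑_x (1 - |⟨ψ, φ x⟩|²)`, one has
`√(N·F) + N·√(1 - p) ≥ N - 1`. -/
theorem groverFinalStep {E : Type*} [NormedAddCommGroup E] [InnerProductSpace ℂ E]
    (N : ℕ) (hN : 0 < N)
    (ψ : E) (hψ : ‖ψ‖ = 1)
    (φ : Fin N → E) (hφ : ∀ x, ‖φ x‖ = 1)
    (C : Fin N → E) (hC : Orthonormal ℂ C)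
    (p F : ℝ)
    (hp : p = (N : ℝ)⁻¹ * ∑ x : Fin N, ‖(inner ℂ (φ x) (C x) : ℂ)‖ ^ 2)
    (hF : F = ∑ x : Fin N, (1 - ‖(inner ℂ ψ (φ x) : ℂ)‖ ^ 2)) :
    Real.sqrt ((N : ℝ) * F) + (N : ℝ) * Real.sqrt (1 - p) ≥ (N : ℝ) - 1 := by
  have hN' : (0 : ℝ) < N := by exact_mod_cast hN
  have hCn : ∀ x, ‖C x‖ = 1 := fun x => hC.1 x
  -- Bessel
  have bessel : ∑ x : Fin N, ‖(inner ℂ ψ (C x) : ℂ)‖ ^ 2 ≤ 1 := by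
    have h := hC.sum_inner_products_le (s := Finset.univ) ψ
    rw [hψ] at h
    simpa [norm_inner_symm] using h
  have hc1 : ∀ x, ‖(inner ℂ ψ (C x) : ℂ)‖ ≤ 1 := fun x => by
    simpa [hψ, hCn x] using norm_inner_le_norm (𝕜 := ℂ) ψ (C x)
  have ha1 : ∀ x, ‖(inner ℂ ψ (φ x) : ℂ)‖ ≤ 1 := fun x => by
    simpa [hψ, hφ x] using norm_inner_le_norm (𝕜 := ℂ) ψ (φ x)
  have hb1 : ∀ x, ‖(inner ℂ (φ x) (C x) : ℂ)‖ ≤ 1 := fun x => by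
    simpa [hφ x, hCn x] using norm_inner_le_norm (𝕜 := ℂ) (φ x) (C x)
  -- step 1 : N - 1 ≤ sum of (1 - c²)
  have step1 : (N : ℝ) - 1 ≤ ∑ x : Fin N, (1 - ‖(inner ℂ ψ (C x) : ℂ)‖ ^ 2) := by
    rw [Finset.sum_sub_distrib]
    simp only [Finset.sum_const, Finset.card_univ, Fintype.card_fin, nsmul_eq_mul, mul_one]
    linarith
  -- step 2 : each term ≤ its sqrt
  have step2 : ∑ x : Fin N, (1 - ‖(inner ℂ ψ (C x) : ℂ)‖ ^ 2) ≤
      ∑ x : Fin N, Real.sqrt (1 - ‖(inner ℂ ψ (C x) : ℂ)‖ ^ 2) := by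
    apply Finset.sum_le_sum
    intro x _
    have h0 : (0 : ℝ) ≤ 1 - ‖(inner ℂ ψ (C x) : ℂ)‖ ^ 2 := by
      have := hc1 x; have := norm_nonneg (inner ℂ ψ (C x) : ℂ); nlinarith
    nlinarith [Real.sq_sqrt h0, Real.sqrt_nonneg (1 - ‖(inner ℂ ψ (C x) : ℂ)‖ ^ 2)]
  -- step 3 : sine triangle inequality pointwise
  have step3 : ∑ x : Fin N, Real.sqrt (1 - ‖(inner ℂ ψ (C x) : ℂ)‖ ^ 2) ≤
      (∑ x : Fin N, Real.sqrt (1 - ‖(inner ℂ ψ (φ x) : ℂ)‖ ^ 2)) +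
      ∑ x : Fin N, Real.sqrt (1 - ‖(inner ℂ (φ x) (C x) : ℂ)‖ ^ 2) := by
    rw [← Finset.sum_add_distrib]
    exact Finset.sum_le_sum fun x _ =>
      grover_sin_triangle ψ (φ x) (C x) hψ (hφ x) (hCn x)
  -- step 4 : Cauchy–Schwarz on each sum
  have step4 : ∑ x : Fin N, Real.sqrt (1 - ‖(inner ℂ ψ (φ x) : ℂ)‖ ^ 2) ≤
      Real.sqrt ((N : ℝ) * F) := by
    rw [hF]
    exact grover_sum_sqrt_le _ fun x => by
      have := ha1 x; have := norm_nonneg (inner ℂ ψ (φ x) : ℂ); nlinarith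
  have step5 : ∑ x : Fin N, Real.sqrt (1 - ‖(inner ℂ (φ x) (C x) : ℂ)‖ ^ 2) ≤
      (N : ℝ) * Real.sqrt (1 - p) := by
    have hsum : ∑ x : Fin N, (1 - ‖(inner ℂ (φ x) (C x) : ℂ)‖ ^ 2) = (N : ℝ) * (1 - p) := by
      rw [Finset.sum_sub_distrib]
      simp only [Finset.sum_const, Finset.card_univ, Fintype.card_fin, nsmul_eq_mul, mul_one]
      rw [hp]
      field_simp
    calc ∑ x : Fin N, Real.sqrt (1 - ‖(inner ℂ (φ x) (C x) : ℂ)‖ ^ 2)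
        ≤ Real.sqrt ((N : ℝ) * ∑ x : Fin N, (1 - ‖(inner ℂ (φ x) (C x) : ℂ)‖ ^ 2)) :=
          grover_sum_sqrt_le _ fun x => by
            have := hb1 x; have := norm_nonneg (inner ℂ (φ x) (C x) : ℂ); nlinarith
      _ = Real.sqrt ((N : ℝ) * ((N : ℝ) * (1 - p))) := by rw [hsum]
      _ = (N : ℝ) * Real.sqrt (1 - p) := by
          rw [← mul_assoc, Real.sqrt_mul (by positivity), Real.sqrt_mul_self hN'.le]
  linarith
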